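/- Let c ∈ ℝ be irrational. If φ : ℝ² → ℝ is continuously differentiable, 2π-periodic in each of its two variables, and satisfies ∂₁φ(z) + c·∂₂φ(z) = 0 for all z ∈ ℝ², then φ is constant. (This Weyl-equidistribution-type rigidity is what verifies the ergodicity Assumption 2.5 for the degenerate example with σ̃ = [[1, 1/c], [c, 1]]: the only invariant functions of the associated degenerate diffusion on the 2-torus are the constants.) -/

import Mathlib

/-- Weyl-type rigidity for an irrational direction field:
if `c` is irrational and `φ : ℝ² → ℝ` is `C¹`, `2π`-periodic in each variable,
and satisfies `∂₁φ + c·∂₂φ = 0` everywhere, then `φ` is constant. -/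
theorem weyl_rigidity_irrational_direction
    (c : ℝ) (hc : Irrational c)
    (φ : ℝ × ℝ → ℝ) (hφ : ContDiff ℝ 1 φ)
    (hper : ∀ (z : ℝ × ℝ) (k : ℤ × ℤ),
      φ (z + (2 * Real.pi * (k.1 : ℝ), 2 * Real.pi * (k.2 : ℝ))) = φ z)
    (hdir : ∀ z : ℝ × ℝ, fderiv ℝ φ z (1, 0) + c * fderiv ℝ φ z (0, 1) = 0) :
    ∀ z w : ℝ × ℝ, φ z = φ w := by
  have hdiff : Differentiable ℝ φ := hφ.differentiable one_ne_zero
  -- directional derivative along (1, c) vanishes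
  have hdir' : ∀ z : ℝ × ℝ, fderiv ℝ φ z (1, c) = 0 := by
    intro z
    have h1 : ((1 : ℝ), c) = ((1 : ℝ), (0:ℝ)) + c • ((0:ℝ), (1:ℝ)) := by
      simp [Prod.ext_iff]
    rw [h1, map_add, map_smul]
    have := hdir z
    simpa [smul_eq_mul] using this
  -- φ is constant along the flow t ↦ z + t • (1, c)
  have key : ∀ (z : ℝ × ℝ) (t : ℝ), φ (z + t • ((1:ℝ), c)) = φ z := by
    intro z t
    set L : ℝ → ℝ × ℝ := fun t => z + t • ((1:ℝ), c) with hL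
    have hLd : ∀ s : ℝ, HasDerivAt L ((1:ℝ), c) s := by
      intro s
      have : HasDerivAt (fun u : ℝ => u • ((1:ℝ), c)) ((1:ℝ) • ((1:ℝ), c)) s :=
        (hasDerivAt_id s).smul_const _
      simpa [L, one_smul] using this.const_add z
    have hFd : ∀ s : ℝ, HasDerivAt (φ ∘ L) 0 s := by
      intro s
      have := (hdiff (L s)).hasFDerivAt.comp_hasDerivAt s (hLd s)
      simpa [hdir' (L s)] using this
    have := is_const_of_deriv_eq_zero (f := φ ∘ L)
      (fun s => (hFd s).differentiableAt) (fun s => (hFd s).deriv) t 0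
    simpa [L, Prod.mk_zero_zero] using this
  -- one-variable reduction
  set g : ℝ → ℝ := fun s => φ (0, s) with hg
  have hrep : ∀ z : ℝ × ℝ, φ z = g (z.2 - z.1 * c) := by
    intro z
    have := key z (-z.1)
    have h2 : z + (-z.1) • ((1:ℝ), c) = ((0:ℝ), z.2 - z.1 * c) := by
      simp [Prod.ext_iff]; ring
    rw [h2] at this
    exact this.symm
  -- periods of g
  have hp1 : ∀ s, g (s + 2 * Real.pi) = g s := by
    intro s
    have := hper (0, s) (0, 1)
    simpa [g, Prod.ext_iff, add_comm] using this
  have hp2 : ∀ s, g (s + 2 * Real.pi * c) = g s := by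
    intro s
    have h1 := key (0, s) (2 * Real.pi)
    have h2 := hper ((0:ℝ), s + 2 * Real.pi * c) (1, 0)
    have e1 : ((0:ℝ), s) + (2 * Real.pi) • ((1:ℝ), c)
        = (2 * Real.pi, s + 2 * Real.pi * c) := by
      simp [Prod.ext_iff]
    have e2 : ((0:ℝ), s + 2 * Real.pi * c) + (2 * Real.pi * ((1:ℤ) : ℝ), 2 * Real.pi * ((0:ℤ) : ℝ))
        = ((2 * Real.pi : ℝ), s + 2 * Real.pi * c) := by
      simp [Prod.ext_iff]
    rw [e1] at h1
    rw [e2] at h2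
    calc g (s + 2 * Real.pi * c) = φ (2 * Real.pi, s + 2 * Real.pi * c) := h2.symm
      _ = g s := h1
  -- subgroup of periods
  set S : AddSubgroup ℝ := AddSubgroup.closure {2 * Real.pi, 2 * Real.pi * c} with hS
  have hper_g : ∀ p ∈ S, ∀ s, g (s + p) = g s := by
    intro p hp
    induction hp using AddSubgroup.closure_induction with
    | mem x hx =>
        rcases hx with h | h
        · subst h; exact hp1
        · simp only [Set.mem_singleton_iff] at h; subst h; exact hp2
    | zero => simp
    | add x y _ _ hx hy => intro s; rw [← add_assoc, hy, hx]
    | neg x _ hx => intro s; have := hx (s + -x); simpa using this.symm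
  -- S is dense
  have hdense : Dense (S : Set ℝ) := by
    rcases S.dense_or_cyclic with h | ⟨a, ha⟩
    · exact h
    · exfalso
      have h1 : (2 * Real.pi) ∈ S := AddSubgroup.subset_closure (by simp)
      have h2 : (2 * Real.pi * c) ∈ S := AddSubgroup.subset_closure (by simp)
      rw [ha, AddSubgroup.mem_closure_singleton] at h1 h2
      obtain ⟨m, hm⟩ := h1
      obtain ⟨n, hn⟩ := h2
      have hπ : (2 * Real.pi) ≠ 0 := by positivity
      have hm0 : (m : ℝ) ≠ 0 := by
        rintro h0
        rw [zsmul_eq_mul, h0, zero_mul] at hm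
        exact hπ hm.symm
      have : c = (n : ℝ) / (m : ℝ) := by
        have ha0 : a = 2 * Real.pi / m := by
          field_simp at hm ⊢
          rw [zsmul_eq_mul] at hm; linarith [hm]
        rw [zsmul_eq_mul, ha0] at hn
        field_simp at hn
        field_simp
        nlinarith [hn, Real.pi_pos]
      exact hc ⟨(n : ℚ) / (m : ℚ), by push_cast [this]; ring⟩
  -- g is constant
  have hgc : Continuous g := hdiff.continuous.comp (continuous_const.prodMk continuous_id)
  have hconst : ∀ s, g s = g 0 := by
    have hclosed : IsClosed {s : ℝ | g s = g 0} := isClosed_eq hgc continuous_const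
    have hsub : (S : Set ℝ) ⊆ {s : ℝ | g s = g 0} := by
      intro p hp
      have := hper_g p hp 0
      simpa using this
    have : Dense {s : ℝ | g s = g 0} := hdense.mono hsub
    intro s
    have := hclosed.closure_eq ▸ this.closure_eq
    exact Set.eq_univ_iff_forall.mp this s
  intro z w
  rw [hrep z, hrep w, hconst (z.2 - z.1 * c), hconst (w.2 - w.1 * c)]
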